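/- Let (X,d,μ) be a metric measure space with a doubling measure μ, Ω ⊂ X an open set, and w a weight on Ω. Then w ∈ WRH_∞(Ω) if and only if there exists a constant C > 0 such that M(w χ_B)(x) ≤ C w_{2B} for almost every x ∈ B, for every ball B with 2B ⋐ Ω (trivially for balls with w(2B)=0). -/

import Mathlib

open MeasureTheory Metric Set
open scoped ENNReal

/-- The (uncentered) Hardy–Littlewood maximal function of `f`:
`Mf(x) = sup { ⨍_B |f| dμ : B a ball containing x }`. -/
noncomputable def HLMax {X : Type*} [PseudoMetricSpace X] [MeasurableSpace X]
    (μ : Measure X) (f : X → ℝ) (x : X) : ℝ≥0∞ :=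
  ⨆ (z : X) (r : ℝ) (_ : x ∈ ball z r),
    (μ (ball z r))⁻¹ * ∫⁻ y in ball z r, ENNReal.ofReal |f y| ∂μ

section Aux

variable {X : Type*} [MetricSpace X] [MeasurableSpace X] [BorelSpace X]
  (μ : Measure X) {Cd : ℝ} (hCd : 1 < Cd)
  (hdoub : ∀ (x : X) (r : ℝ), 0 < r →
      0 < μ (ball x r) ∧ μ (ball x r) < ⊤ ∧
      μ (ball x (2 * r)) ≤ ENNReal.ofReal Cd * μ (ball x r))

include hCd hdoub

lemma aux_doub_pow (k : ℕ) (x : X) (s : ℝ) (hs : 0 < s) :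
    μ (ball x (2 ^ k * s)) ≤ (ENNReal.ofReal Cd) ^ k * μ (ball x s) := by
  induction k with
  | zero => simp
  | succ k ih =>
    have h2 : (0 : ℝ) < 2 ^ k * s := by positivity
    have heq : (2 : ℝ) ^ (k + 1) * s = 2 * (2 ^ k * s) := by ring
    calc μ (ball x (2 ^ (k + 1) * s)) = μ (ball x (2 * (2 ^ k * s))) := by rw [heq]
      _ ≤ ENNReal.ofReal Cd * μ (ball x (2 ^ k * s)) := (hdoub x _ h2).2.2
      _ ≤ ENNReal.ofReal Cd * ((ENNReal.ofReal Cd) ^ k * μ (ball x s)) := by gcongr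
      _ = (ENNReal.ofReal Cd) ^ (k + 1) * μ (ball x s) := by ring

lemma aux_scale (s t : ℝ) (hs : 0 < s) :
    ∃ K : ℝ≥0∞, K ≠ 0 ∧ K ≠ ⊤ ∧ ∀ x : X, μ (ball x t) ≤ K * μ (ball x s) := by
  obtain ⟨k, hk⟩ := pow_unbounded_of_one_lt (t / s) (one_lt_two (α := ℝ))
  have hCd0 : ENNReal.ofReal Cd ≠ 0 := by
    simp only [ne_eq, ENNReal.ofReal_eq_zero, not_le]
    linarith
  refine ⟨(ENNReal.ofReal Cd) ^ k, pow_ne_zero _ hCd0, ENNReal.pow_ne_top ENNReal.ofReal_ne_top,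
    fun x => ?_⟩
  have ht : t ≤ 2 ^ k * s := by
    rw [div_lt_iff₀ hs] at hk
    linarith
  exact le_trans (measure_mono (ball_subset_ball ht)) (aux_doub_pow μ hCd hdoub k x s hs)

lemma aux_totallyBounded (x : X) (R : ℝ) : TotallyBounded (ball x R) := by
  rcases le_or_gt R 0 with hR | hR
  · rw [ball_eq_empty.2 hR]; exact totallyBounded_empty
  classical
  by_contra hnot
  rw [Metric.totallyBounded_iff] at hnot
  push_neg at hnot
  obtain ⟨ε, hε, hcov⟩ := hnot
  -- choice function: for every finite set, a point of the ball `ε`-far from all its points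
  have hsel : ∀ t : Finset X, ∃ p, p ∈ ball x R ∧ ∀ q ∈ t, ε ≤ dist p q := by
    intro t
    have h1 := hcov t t.finite_toSet
    rw [not_subset] at h1
    obtain ⟨p, hp, hp2⟩ := h1
    refine ⟨p, hp, fun q hq => ?_⟩
    by_contra hlt
    push_neg at hlt
    exact hp2 (Set.mem_biUnion hq (mem_ball.2 hlt))
  choose g hg1 hg2 using hsel
  let v : ℕ → Finset X := fun n => Nat.rec ∅ (fun _ t => insert (g t) t) n
  let u : ℕ → X := fun n => g (v n)
  have hvsucc : ∀ n, v (n + 1) = insert (u n) (v n) := fun n => rfl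
  have hmono : Monotone v := monotone_nat_of_le_succ fun n => by
    rw [hvsucc]; exact Finset.subset_insert _ _
  have humem : ∀ {m n : ℕ}, m < n → u m ∈ v n := by
    intro m n h
    exact hmono h (by rw [hvsucc m]; exact Finset.mem_insert_self _ _)
  have hsep : ∀ {m n : ℕ}, m < n → ε ≤ dist (u n) (u m) := fun h => hg2 _ _ (humem h)
  obtain ⟨K, hK0, hKt, hKle⟩ := aux_scale μ hCd hdoub (ε / 2) (2 * R) (by positivity)
  have hc : ∀ n, μ (ball x R) ≤ K * μ (ball (u n) (ε / 2)) := by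
    intro n
    have hsub : ball x R ⊆ ball (u n) (2 * R) := by
      intro y hy
      have h1 : dist y x < R := mem_ball.1 hy
      have h2 : dist (u n) x < R := mem_ball.1 (hg1 (v n))
      have : dist y (u n) ≤ dist y x + dist x (u n) := dist_triangle _ _ _
      rw [dist_comm x (u n)] at this
      exact mem_ball.2 (by linarith)
    exact le_trans (measure_mono hsub) (hKle _)
  have hdisj : Pairwise fun m n => Disjoint (ball (u m) (ε / 2)) (ball (u n) (ε / 2)) := by
    intro m n hmn
    rw [Set.disjoint_left]
    intro y hym hyn
    have h1 : dist (u m) (u n) < ε := by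
      have haa : dist y (u m) < ε / 2 := mem_ball.1 hym
      have hb : dist y (u n) < ε / 2 := mem_ball.1 hyn
      have := dist_triangle (u m) y (u n)
      rw [dist_comm (u m) y] at this
      linarith
    rcases hmn.lt_or_gt with h | h
    · have := hsep h
      rw [dist_comm] at this
      linarith
    · have := hsep h
      linarith
  have hcup : (⋃ n, ball (u n) (ε / 2)) ⊆ ball x (R + ε / 2) := by
    refine Set.iUnion_subset fun n y hy => ?_
    have h1 : dist y (u n) < ε / 2 := mem_ball.1 hy
    have h2 : dist (u n) x < R := mem_ball.1 (hg1 (v n))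
    have := dist_triangle y (u n) x
    exact mem_ball.2 (by linarith)
  have hfin : μ (ball x (R + ε / 2)) < ⊤ := (hdoub x _ (by positivity)).2.1
  have hbpos : 0 < μ (ball x R) := (hdoub x R hR).1
  have hterm : ∀ n : ℕ, K⁻¹ * μ (ball x R) ≤ μ (ball (u n) (ε / 2)) := by
    intro n
    calc K⁻¹ * μ (ball x R) ≤ K⁻¹ * (K * μ (ball (u n) (ε / 2))) := by gcongr; exact hc n
      _ = μ (ball (u n) (ε / 2)) := by rw [← mul_assoc, ENNReal.inv_mul_cancel hK0 hKt, one_mul]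
  have hne : K⁻¹ * μ (ball x R) ≠ 0 :=
    mul_ne_zero (ENNReal.inv_ne_zero.2 hKt) hbpos.ne'
  have htop : (⊤ : ℝ≥0∞) ≤ μ (⋃ n, ball (u n) (ε / 2)) := by
    rw [measure_iUnion hdisj fun n => measurableSet_ball]
    calc (⊤ : ℝ≥0∞) = ∑' _ : ℕ, K⁻¹ * μ (ball x R) :=
          (ENNReal.tsum_const_eq_top_of_ne_zero hne).symm
      _ ≤ ∑' n, μ (ball (u n) (ε / 2)) := ENNReal.tsum_le_tsum hterm
  exact absurd (lt_of_le_of_lt (htop.trans (measure_mono hcup)) hfin) (lt_irrefl _)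

lemma aux_separable : TopologicalSpace.SeparableSpace X := by
  rw [← TopologicalSpace.isSeparable_univ_iff]
  rcases isEmpty_or_nonempty X with h | h
  · rw [Set.univ_eq_empty_iff.2 h]
    exact Set.Finite.isSeparable Set.finite_empty
  · obtain ⟨x⟩ := h
    rw [← Metric.iUnion_ball_nat x]
    exact TopologicalSpace.IsSeparable.iUnion fun n =>
      (aux_totallyBounded μ hCd hdoub x n).isSeparable

lemma aux_unifLocDoubling : IsUnifLocDoublingMeasure μ := by
  have hCd0 : (0 : ℝ) ≤ Cd := by linarith
  refine ⟨⟨(Cd * Cd).toNNReal, ?_⟩⟩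
  filter_upwards [self_mem_nhdsWithin] with ε (hε : ε ∈ Ioi (0 : ℝ))
  intro x
  have hε0 : (0 : ℝ) < ε := hε
  have h1 : μ (closedBall x (2 * ε)) ≤ μ (ball x (2 * (2 * ε))) :=
    measure_mono (closedBall_subset_ball (by linarith))
  have h2 : μ (ball x (2 * (2 * ε))) ≤ ENNReal.ofReal Cd * μ (ball x (2 * ε)) :=
    (hdoub x (2 * ε) (by linarith)).2.2
  have h3 : μ (ball x (2 * ε)) ≤ ENNReal.ofReal Cd * μ (ball x ε) := (hdoub x ε hε0).2.2
  have h4 : μ (ball x ε) ≤ μ (closedBall x ε) := measure_mono ball_subset_closedBall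
  have hco : ((Cd * Cd).toNNReal : ℝ≥0∞) = ENNReal.ofReal Cd * ENNReal.ofReal Cd := by
    rw [← ENNReal.ofReal_mul hCd0]; rfl
  calc μ (closedBall x (2 * ε)) ≤ ENNReal.ofReal Cd * μ (ball x (2 * ε)) := h1.trans h2
    _ ≤ ENNReal.ofReal Cd * (ENNReal.ofReal Cd * μ (closedBall x ε)) := by
        gcongr; exact h3.trans (by gcongr)
    _ = ((Cd * Cd).toNNReal : ℝ≥0∞) * μ (closedBall x ε) := by rw [hco, mul_assoc]

end Aux

/-- `w ∈ WRH_∞(Ω)` if and only if there is a constant `C > 0` such that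
`M(w χ_B) ≤ C w_{2B}` almost everywhere on `B`, for every ball `B` with `2B ⋐ Ω`. -/
theorem wrhInfty_iff_maximal_le {X : Type*} [MetricSpace X] [MeasurableSpace X] [BorelSpace X]
    (μ : Measure X) (Cd : ℝ) (hCd : 1 < Cd)
    (hdoub : ∀ (x : X) (r : ℝ), 0 < r →
      0 < μ (ball x r) ∧ μ (ball x r) < ⊤ ∧
      μ (ball x (2 * r)) ≤ ENNReal.ofReal Cd * μ (ball x r))
    (Ω : Set X) (hΩ : IsOpen Ω) (w : X → ℝ) (hw : ∀ x, 0 ≤ w x)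
    (hwloc : LocallyIntegrableOn w Ω μ) :
    (∃ C : ℝ, 0 < C ∧ ∀ (x : X) (r : ℝ), 0 < r →
        IsCompact (closure (ball x (2 * r))) → closure (ball x (2 * r)) ⊆ Ω →
        essSup (fun y => ENNReal.ofReal (w y)) (μ.restrict (ball x r)) ≤
          ENNReal.ofReal (C * ⨍ y in ball x (2 * r), w y ∂μ)) ↔
    (∃ C : ℝ, 0 < C ∧ ∀ (x : X) (r : ℝ), 0 < r →
        IsCompact (closure (ball x (2 * r))) → closure (ball x (2 * r)) ⊆ Ω →
        ∀ᵐ y ∂μ.restrict (ball x r),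
          HLMax μ ((ball x r).indicator w) y ≤
            ENNReal.ofReal (C * ⨍ z in ball x (2 * r), w z ∂μ)) := by
  have hCd0 : (0 : ℝ) ≤ Cd := by linarith
  haveI : TopologicalSpace.SeparableSpace X := aux_separable μ hCd hdoub
  haveI : SecondCountableTopology X := UniformSpace.secondCountable_of_separable X
  haveI : IsUnifLocDoublingMeasure μ := aux_unifLocDoubling μ hCd hdoub
  haveI : IsLocallyFiniteMeasure μ :=
    ⟨fun x => ⟨ball x 1, ball_mem_nhds x one_pos, (hdoub x 1 one_pos).2.1⟩⟩
  constructor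
  · -- WRH_∞ implies the maximal bound
    rintro ⟨C, hC, h⟩
    refine ⟨C, hC, fun x r hr hcomp hsub => ae_of_all _ fun y => ?_⟩
    set B := ball x r with hB
    set S := ENNReal.ofReal (C * ⨍ z in ball x (2 * r), w z ∂μ) with hS
    have hESS := h x r hr hcomp hsub
    have hae : ∀ᵐ t ∂μ.restrict B, ENNReal.ofReal (w t) ≤ S :=
      (ENNReal.ae_le_essSup _).mono fun t ht => le_trans ht hESS
    refine iSup_le fun z => iSup_le fun r' => iSup_le fun hy => ?_
    have hr' : 0 < r' := lt_of_le_of_lt dist_nonneg (mem_ball.1 hy)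
    obtain ⟨hm0, hmt, -⟩ := hdoub z r' hr'
    have hpt : ∀ t, ENNReal.ofReal |B.indicator w t| =
        B.indicator (fun a => ENNReal.ofReal (w a)) t := by
      intro t
      by_cases ht : t ∈ B <;>
        simp [Set.indicator_apply, ht, abs_of_nonneg (hw t)]
    have h1 : ∫⁻ t in ball z r', ENNReal.ofReal |B.indicator w t| ∂μ =
        ∫⁻ t in B ∩ ball z r', ENNReal.ofReal (w t) ∂μ := by
      simp_rw [hpt]
      rw [lintegral_indicator measurableSet_ball,
        Measure.restrict_restrict measurableSet_ball]
    have h2 : ∫⁻ t in B ∩ ball z r', ENNReal.ofReal (w t) ∂μ ≤ S * μ (B ∩ ball z r') := by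
      have hae2 : ∀ᵐ t ∂μ.restrict (B ∩ ball z r'), ENNReal.ofReal (w t) ≤ S :=
        ae_restrict_of_ae_restrict_of_subset Set.inter_subset_left hae
      calc ∫⁻ t in B ∩ ball z r', ENNReal.ofReal (w t) ∂μ
          ≤ ∫⁻ _ in B ∩ ball z r', S ∂μ := lintegral_mono_ae hae2
        _ = S * μ (B ∩ ball z r') := setLIntegral_const _ _
    calc (μ (ball z r'))⁻¹ * ∫⁻ t in ball z r', ENNReal.ofReal |B.indicator w t| ∂μ
        ≤ (μ (ball z r'))⁻¹ * (S * μ (ball z r')) := by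
          rw [h1]
          exact mul_le_mul_right
            (h2.trans (mul_le_mul_right (measure_mono Set.inter_subset_right) S)) _
      _ = S := by
          rw [mul_comm S, ← mul_assoc, ENNReal.inv_mul_cancel hm0.ne' hmt.ne, one_mul]
  · -- the maximal bound implies WRH_∞
    rintro ⟨C, hC, h⟩
    refine ⟨Cd * C, mul_pos (by linarith) hC, fun x r hr hcomp hsub => ?_⟩
    set B := ball x r with hB
    set f := B.indicator w with hf_def
    have hfnn : ∀ t, 0 ≤ f t := fun t => Set.indicator_nonneg (fun a _ => hw a) t
    have hint : IntegrableOn w (closure (ball x (2 * r))) μ :=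
      hwloc.integrableOn_compact_subset hsub hcomp
    have hBsub : B ⊆ closure (ball x (2 * r)) :=
      (ball_subset_ball (by linarith)).trans subset_closure
    have hint2 : IntegrableOn w B μ := hint.mono_set hBsub
    have hf : Integrable f μ := hint2.integrable_indicator measurableSet_ball
    have hfloc : LocallyIntegrable f μ := hf.locallyIntegrable
    have hdiff := IsUnifLocDoublingMeasure.ae_tendsto_average (μ := μ) hfloc 1
    have hmax := h x r hr hcomp hsub
    have hmain : ∀ᵐ y ∂μ.restrict B, ENNReal.ofReal (w y) ≤
        ENNReal.ofReal (Cd * C * ⨍ z in ball x (2 * r), w z ∂μ) := by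
      filter_upwards [ae_restrict_of_ae hdiff, ae_restrict_mem measurableSet_ball, hmax]
        with y hy hyB hyM
      -- key pointwise bound for each small radius
      have claim : ∀ ρ : ℝ, 0 < ρ →
          ENNReal.ofReal (⨍ t in closedBall y ρ, f t ∂μ) ≤
            ENNReal.ofReal Cd * HLMax μ f y := by
        intro ρ hρ
        set s := closedBall y ρ with hs_def
        have h1 : 0 < μ s :=
          lt_of_lt_of_le (hdoub y ρ hρ).1 (measure_mono ball_subset_closedBall)
        have h2 : μ s < ⊤ :=
          lt_of_le_of_lt (measure_mono (closedBall_subset_ball (by linarith)))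
            (hdoub y (2 * ρ) (by linarith)).2.1
        have hIf : Integrable f (μ.restrict s) := hf.integrableOn
        have hnn : 0 ≤ᵐ[μ.restrict s] f := Filter.Eventually.of_forall hfnn
        have hint_eq : ∫ t in s, f t ∂μ =
            (∫⁻ t in s, ENNReal.ofReal (f t) ∂μ).toReal :=
          integral_eq_lintegral_of_nonneg_ae hnn hIf.aestronglyMeasurable
        set I := ∫⁻ t in s, ENNReal.ofReal (f t) ∂μ with hI_def
        have hI : I ≠ ⊤ :=
          (lt_of_le_of_lt (setLIntegral_le_lintegral _ _) hf.lintegral_lt_top).ne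
        have havg : ⨍ t in s, f t ∂μ = (μ s).toReal⁻¹ * I.toReal := by
          rw [setAverage_eq, smul_eq_mul, hint_eq]; rfl
        have hofreal : ENNReal.ofReal (⨍ t in s, f t ∂μ) = (μ s)⁻¹ * I := by
          rw [havg, ENNReal.ofReal_mul (inv_nonneg.2 ENNReal.toReal_nonneg),
            ENNReal.ofReal_inv_of_pos (ENNReal.toReal_pos h1.ne' h2.ne),
            ENNReal.ofReal_toReal h2.ne, ENNReal.ofReal_toReal hI]
        set b₂ := μ (ball y (2 * ρ)) with hb₂_def
        have hb₂0 : b₂ ≠ 0 :=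
          (lt_of_lt_of_le (hdoub y ρ hρ).1
            (measure_mono (ball_subset_ball (by linarith)))).ne'
        have hb₂t : b₂ ≠ ⊤ := (hdoub y (2 * ρ) (by linarith)).2.1.ne
        have hterm : b₂⁻¹ * ∫⁻ t in ball y (2 * ρ), ENNReal.ofReal |f t| ∂μ ≤
            HLMax μ f y := by
          have hy2 : y ∈ ball y (2 * ρ) := mem_ball_self (by linarith)
          exact le_iSup₂_of_le y (2 * ρ) (le_iSup_of_le hy2 le_rfl)
        have hI2 : I ≤ ∫⁻ t in ball y (2 * ρ), ENNReal.ofReal |f t| ∂μ := by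
          have habs : ∀ t, ENNReal.ofReal (f t) = ENNReal.ofReal |f t| := fun t => by
            rw [abs_of_nonneg (hfnn t)]
          calc I = ∫⁻ t in s, ENNReal.ofReal |f t| ∂μ := by simp_rw [hI_def, habs]
            _ ≤ _ := lintegral_mono_set (closedBall_subset_ball (by linarith))
        have hμ2 : b₂ ≤ ENNReal.ofReal Cd * μ s :=
          le_trans (hdoub y ρ hρ).2.2
            (mul_le_mul_right (measure_mono ball_subset_closedBall) _)
        have hinv : (μ s)⁻¹ ≤ ENNReal.ofReal Cd * b₂⁻¹ := by
          calc (μ s)⁻¹ = (b₂⁻¹ * b₂) * (μ s)⁻¹ := by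
                rw [ENNReal.inv_mul_cancel hb₂0 hb₂t, one_mul]
            _ = b₂⁻¹ * (b₂ * (μ s)⁻¹) := mul_assoc _ _ _
            _ ≤ b₂⁻¹ * ((ENNReal.ofReal Cd * μ s) * (μ s)⁻¹) := by gcongr
            _ = (ENNReal.ofReal Cd * b₂⁻¹) * (μ s * (μ s)⁻¹) := by ring
            _ = ENNReal.ofReal Cd * b₂⁻¹ := by
                rw [ENNReal.mul_inv_cancel h1.ne' h2.ne, mul_one]
        calc ENNReal.ofReal (⨍ t in s, f t ∂μ) = (μ s)⁻¹ * I := hofreal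
          _ ≤ (ENNReal.ofReal Cd * b₂⁻¹) *
              ∫⁻ t in ball y (2 * ρ), ENNReal.ofReal |f t| ∂μ := mul_le_mul' hinv hI2
          _ = ENNReal.ofReal Cd *
              (b₂⁻¹ * ∫⁻ t in ball y (2 * ρ), ENNReal.ofReal |f t| ∂μ) := mul_assoc _ _ _
          _ ≤ ENNReal.ofReal Cd * HLMax μ f y := mul_le_mul_right hterm _
      -- limit of averages over shrinking closed balls
      have htend : Filter.Tendsto (fun ρ : ℝ => ⨍ t in closedBall y ρ, f t ∂μ)
          (nhdsWithin 0 (Ioi 0)) (nhds (f y)) := by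
        refine hy (fun _ : ℝ => y) id Filter.tendsto_id ?_
        filter_upwards [self_mem_nhdsWithin] with ρ (hρ : ρ ∈ Ioi (0 : ℝ))
        exact mem_closedBall_self (by simpa using le_of_lt hρ)
      have h3 : ENNReal.ofReal (f y) ≤ ENNReal.ofReal Cd * HLMax μ f y := by
        refine le_of_tendsto ((ENNReal.continuous_ofReal.tendsto (f y)).comp htend) ?_
        filter_upwards [self_mem_nhdsWithin] with ρ (hρ : ρ ∈ Ioi (0 : ℝ))
        exact claim ρ hρ
      have hfy : f y = w y := Set.indicator_of_mem hyB w
      calc ENNReal.ofReal (w y) = ENNReal.ofReal (f y) := by rw [hfy]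
        _ ≤ ENNReal.ofReal Cd * HLMax μ f y := h3
        _ ≤ ENNReal.ofReal Cd * ENNReal.ofReal (C * ⨍ z in ball x (2 * r), w z ∂μ) :=
            mul_le_mul_right hyM _
        _ = ENNReal.ofReal (Cd * C * ⨍ z in ball x (2 * r), w z ∂μ) := by
            rw [← ENNReal.ofReal_mul hCd0, mul_assoc]
    exact essSup_le_of_ae_le _ hmain
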